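/- Let N be a finite nonempty player set and for each nonempty S ⊆ N let a_S < b_S be reals; set μ_S = (a_S + b_S)/2. Let a be the lower bound game (value a_S on each nonempty S, 0 on ∅) and μ the mean game (value μ_S on each nonempty S, 0 on ∅). If the game a is convex and the core C(μ) is nonempty, then there exist d, r : N → ℝ with r_i ≥ 0 for all i, d(N) = μ_N, r(N) = 1, such that for every nonempty S ⊆ N the pushforward of Unif[a_N, b_N] under the map z ↦ d(S) + r(S)·(z − μ_N) second-order stochastically dominates Unif[a_S, b_S]. -/

import Mathlib

open MeasureTheory ProbabilityTheory
open scoped NNReal ENNReal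

/-- `P` second-order stochastically dominates `Q`. -/
def SSD (P Q : Measure ℝ) : Prop :=
  ∀ u : ℝ, (∫ z in Set.Iic u, (cdf P z - cdf Q z)) ≤ 0

/-- The uniform probability measure on the interval `[a, b]`. -/
noncomputable def unif (a b : ℝ) : Measure ℝ :=
  (ENNReal.ofReal (b - a))⁻¹ • (volume.restrict (Set.Icc a b))

/-- The core of a TU-game `v` on the finite player set `N`. -/
def core {N : Type*} [Fintype N] (v : Finset N → ℝ) : Set (N → ℝ) :=
  {x | (∀ S : Finset N, v S ≤ ∑ i ∈ S, x i) ∧ ∑ i : N, x i = v Finset.univ}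

/-- A TU-game `v` is convex. -/
def IsConvexGame {N : Type*} [Fintype N] [DecidableEq N] (v : Finset N → ℝ) : Prop :=
  ∀ S T : Finset N, v S + v T ≤ v (S ∪ T) + v (S ∩ T)

namespace SSDAux

open Set

/-! ### Analytic auxiliary results -/

/-- The cdf of the uniform distribution on `[l, h]`. -/
noncomputable def F (l h z : ℝ) : ℝ := max 0 (min z h - l) / (h - l)

lemma F_nonneg {l h : ℝ} (hl : l < h) (z : ℝ) : 0 ≤ F l h z :=
  div_nonneg (le_max_left _ _) (by linarith)

lemma F_le_one {l h : ℝ} (hl : l < h) (z : ℝ) : F l h z ≤ 1 := by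
  rw [F, div_le_one (by linarith)]
  have := min_le_right z h
  exact max_le (by linarith) (by linarith)

lemma F_eq_zero {l h : ℝ} (hl : l < h) {z : ℝ} (hz : z ≤ l) : F l h z = 0 := by
  rw [F, max_eq_left, zero_div]
  have : min z h ≤ z := min_le_left _ _
  linarith

lemma F_eq_one {l h : ℝ} (hl : l < h) {z : ℝ} (hz : h ≤ z) : F l h z = 1 := by
  rw [F, min_eq_right hz, max_eq_right (by linarith), div_self (by linarith)]

lemma continuous_F (l h : ℝ) : Continuous (F l h) :=
  (continuous_const.max ((continuous_id.min continuous_const).sub continuous_const)).div_const _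

lemma unif_apply (l h : ℝ) (s : Set ℝ) :
    unif l h s = (ENNReal.ofReal (h - l))⁻¹ * volume (s ∩ Icc l h) := by
  rw [unif, Measure.smul_apply, smul_eq_mul, Measure.restrict_apply']
  exact measurableSet_Icc

lemma isProbabilityMeasure_unif {l h : ℝ} (hl : l < h) : IsProbabilityMeasure (unif l h) := by
  constructor
  rw [unif_apply, Set.univ_inter, Real.volume_Icc,
    ENNReal.inv_mul_cancel (by simp [hl, sub_pos]) ENNReal.ofReal_ne_top]

lemma cdf_unif {l h : ℝ} (hl : l < h) (z : ℝ) : cdf (unif l h) z = F l h z := by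
  have : IsProbabilityMeasure (unif l h) := isProbabilityMeasure_unif hl
  rw [cdf_eq_real, measureReal_def, unif_apply]
  have hset : Iic z ∩ Icc l h = Icc l (min z h) := by
    ext x
    simp only [mem_inter_iff, mem_Iic, mem_Icc, le_min_iff]
    constructor
    · rintro ⟨h1, h2, h3⟩; exact ⟨h2, h1, h3⟩
    · rintro ⟨h1, h2, h3⟩; exact ⟨h2, h1, h3⟩
  rw [hset, Real.volume_Icc]
  rcases le_total (min z h) l with hc | hc
  · rw [ENNReal.ofReal_eq_zero.2 (show min z h - l ≤ 0 by linarith), mul_zero,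
      ENNReal.toReal_zero, F, max_eq_left (by linarith), zero_div]
  · rw [ENNReal.toReal_mul, ENNReal.toReal_inv, ENNReal.toReal_ofReal (by linarith),
      ENNReal.toReal_ofReal (by linarith), F, max_eq_right (by linarith)]
    rw [div_eq_inv_mul]

lemma integrableOn_F (l h H : ℝ) (hl : l < h) : IntegrableOn (F l h) (Iic H) := by
  have h1 : IntegrableOn (F l h) (Iic l) := by
    rw [integrableOn_congr_fun (g := fun _ => (0:ℝ))
      (fun z hz => F_eq_zero hl (mem_Iic.1 hz)) measurableSet_Iic]
    exact integrableOn_zero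
  have h2 : IntegrableOn (F l h) (Ioc l H) := (continuous_F l h).integrableOn_Ioc
  have := h1.union h2
  rcases le_total l H with hlH | hlH
  · rwa [Iic_union_Ioc_eq_Iic hlH] at this
  · exact h1.mono_set (Iic_subset_Iic.2 hlH)

lemma integral_F {l h H : ℝ} (hl : l < h) (hH : h ≤ H) :
    ∫ z in Iic H, F l h z = H - (l + h) / 2 := by
  have hlH : l ≤ H := by linarith
  have hzero : ∫ z in Iic l, F l h z = 0 := by
    rw [setIntegral_congr_fun measurableSet_Iic
      (fun z hz => F_eq_zero hl (mem_Iic.1 hz))]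
    simp
  have hsplit : ∫ z in Iic H, F l h z
      = (∫ z in Iic l, F l h z) + ∫ z in Ioc l H, F l h z := by
    rw [← setIntegral_union (Iic_disjoint_Ioc le_rfl) measurableSet_Ioc
      ((integrableOn_F l h H hl).mono_set (Iic_subset_Iic.2 hlH))
      ((integrableOn_F l h H hl).mono_set Ioc_subset_Iic_self),
      Iic_union_Ioc_eq_Iic hlH]
  have hIoc : ∫ z in Ioc l H, F l h z = ∫ z in l..H, F l h z :=
    (intervalIntegral.integral_of_le hlH).symm
  have hadj : ∫ z in l..H, F l h z = (∫ z in l..h, F l h z) + ∫ z in h..H, F l h z :=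
    (intervalIntegral.integral_add_adjacent_intervals
      ((continuous_F l h).intervalIntegrable _ _)
      ((continuous_F l h).intervalIntegrable _ _)).symm
  have h1 : ∫ z in l..h, F l h z = (h - l) / 2 := by
    rw [intervalIntegral.integral_congr (g := fun z => (z - l) / (h - l))
      (fun z hz => by
        rw [uIcc_of_le (le_of_lt hl)] at hz
        rw [F, min_eq_left hz.2, max_eq_right (by linarith [hz.1])])]
    rw [intervalIntegral.integral_div]
    rw [intervalIntegral.integral_sub (intervalIntegral.intervalIntegrable_id)
      (intervalIntegrable_const), integral_id, intervalIntegral.integral_const]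
    simp only [smul_eq_mul]
    rw [div_eq_div_iff (by linarith) (by norm_num)]
    ring
  have h2 : ∫ z in h..H, F l h z = H - h := by
    rw [intervalIntegral.integral_congr (g := fun _ => (1:ℝ))
      (fun z hz => by
        rw [uIcc_of_le hH] at hz
        exact F_eq_one hl hz.1)]
    simp
  rw [hsplit, hzero, hIoc, hadj, h1, h2]
  ring

/-- Single-crossing property for uniform cdfs with ordered left endpoints. -/
lemma F_cross {l1 h1 l2 h2 : ℝ} (h1lt : l1 < h1) (h2lt : l2 < h2) (hl : l2 ≤ l1) :
    ∀ z z', z ≤ z' → F l2 h2 z < F l1 h1 z → F l2 h2 z' ≤ F l1 h1 z' := by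
  intro z z' hzz' hlt
  have hw1p : (0:ℝ) < h1 - l1 := by linarith
  have hw2p : (0:ℝ) < h2 - l2 := by linarith
  rw [F, F, div_lt_div_iff₀ hw2p hw1p] at hlt
  rw [F, F, div_le_div_iff₀ hw2p hw1p]
  have hM2z : (0:ℝ) ≤ max 0 (min z h2 - l2) := le_max_left _ _
  have hM1zpos : 0 < max 0 (min z h1 - l1) := by nlinarith
  have hminz : l1 < min z h1 := by
    by_contra hcon; push_neg at hcon
    rw [max_eq_left (by linarith)] at hM1zpos; linarith
  have hzl1 : l1 < z := lt_of_lt_of_le hminz (min_le_left _ _)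
  have hzl1' : l1 < z' := lt_of_lt_of_le hzl1 hzz'
  have hM2z'le : max 0 (min z' h2 - l2) ≤ h2 - l2 :=
    max_le (by linarith) (by linarith [min_le_right z' h2])
  rcases le_total h1 z' with hc1 | hc1
  · rw [min_eq_right hc1, max_eq_right (show (0:ℝ) ≤ h1 - l1 by linarith)]
    nlinarith [mul_le_mul_of_nonneg_right hM2z'le hw1p.le]
  · have hzh1 : z ≤ h1 := le_trans hzz' hc1
    rw [min_eq_left hc1, max_eq_right (show (0:ℝ) ≤ z' - l1 by linarith)]
    rw [min_eq_left hzh1, max_eq_right (show (0:ℝ) ≤ z - l1 by linarith)] at hlt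
    rcases le_total z' h2 with hc2 | hc2
    · have hzh2 : z ≤ h2 := le_trans hzz' hc2
      rw [min_eq_left hzh2, max_eq_right (show (0:ℝ) ≤ z - l2 by linarith)] at hlt
      rw [min_eq_left hc2, max_eq_right (show (0:ℝ) ≤ z' - l2 by linarith)]
      rcases le_total (h1 - l1) (h2 - l2) with hw | hw
      · nlinarith [mul_nonneg (sub_nonneg.2 hzz') (sub_nonneg.2 hw)]
      · nlinarith [mul_le_mul_of_nonneg_left hw (le_of_lt (sub_pos.2 hzl1)),
          mul_nonneg (sub_nonneg.2 hl) hw1p.le]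
    · rw [min_eq_right hc2, max_eq_right (show (0:ℝ) ≤ h2 - l2 by linarith)]
      have hkey : h1 ≤ z' := by
        by_contra hcon
        push_neg at hcon
        have hh : h2 < h1 := lt_of_le_of_lt hc2 hcon
        rcases le_total h2 z with hc3 | hc3
        · rw [min_eq_right hc3, max_eq_right (show (0:ℝ) ≤ h2 - l2 by linarith)] at hlt
          nlinarith [mul_lt_mul_of_pos_right (show z - l1 < h1 - l1 by linarith) hw2p]
        · rw [min_eq_left hc3, max_eq_right (show (0:ℝ) ≤ z - l2 by linarith)] at hlt
          rcases le_total (h1 - l1) (h2 - l2) with hw | hw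
          · nlinarith [mul_nonneg (sub_nonneg.2 hc3) (sub_nonneg.2 hw),
              mul_pos hw2p (sub_pos.2 hh)]
          · nlinarith [mul_le_mul_of_nonneg_left hw (le_of_lt (sub_pos.2 hzl1)),
              mul_nonneg (sub_nonneg.2 hl) hw1p.le]
      nlinarith

/-- Key single-crossing criterion for second-order stochastic dominance. -/
lemma key (f g : ℝ → ℝ) (H : ℝ)
    (hint : IntegrableOn (fun z => f z - g z) (Iic H))
    (hcross : ∀ z z', z ≤ z' → g z < f z → g z' ≤ f z')
    (heq : ∀ z, H ≤ z → f z = g z)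
    (hH : ∫ z in Iic H, (f z - g z) ≤ 0) :
    ∀ u : ℝ, ∫ z in Iic u, (f z - g z) ≤ 0 := by
  intro u
  by_cases hc : ∀ z ≤ u, f z ≤ g z
  · exact setIntegral_nonpos measurableSet_Iic
      (fun z hz => by linarith [hc z (mem_Iic.1 hz)])
  · push_neg at hc
    obtain ⟨z0, hz0u, hz0⟩ := hc
    have hpos : ∀ z, u ≤ z → g z ≤ f z := fun z hz =>
      hcross z0 z (le_trans hz0u hz) hz0
    rcases le_total u H with huH | huH
    · have hsplit : ∫ z in Iic H, (f z - g z)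
          = (∫ z in Iic u, (f z - g z)) + ∫ z in Ioc u H, (f z - g z) := by
        rw [← setIntegral_union (Iic_disjoint_Ioc le_rfl) measurableSet_Ioc
          (hint.mono_set (Iic_subset_Iic.2 huH))
          (hint.mono_set Ioc_subset_Iic_self), Iic_union_Ioc_eq_Iic huH]
      have h2 : 0 ≤ ∫ z in Ioc u H, (f z - g z) :=
        setIntegral_nonneg measurableSet_Ioc
          (fun z hz => by linarith [hpos z (le_of_lt hz.1)])
      linarith [hsplit ▸ hH]
    · have hsplit : ∫ z in Iic u, (f z - g z)
          = (∫ z in Iic H, (f z - g z)) + ∫ z in Ioc H u, (f z - g z) := by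
        rw [← setIntegral_union (Iic_disjoint_Ioc le_rfl) measurableSet_Ioc hint
          (by
            rw [integrableOn_congr_fun (g := fun _ => (0:ℝ))
              (fun z hz => sub_eq_zero_of_eq (heq z (le_of_lt hz.1))) measurableSet_Ioc]
            exact integrableOn_zero), Iic_union_Ioc_eq_Iic huH]
      have h2 : ∫ z in Ioc H u, (f z - g z) = 0 := by
        rw [setIntegral_congr_fun measurableSet_Ioc
          (fun z hz => sub_eq_zero_of_eq (heq z (le_of_lt hz.1)))]
        simp
      rw [hsplit, h2]
      linarith

lemma indicator_integrableOn (c H : ℝ) :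
    IntegrableOn (fun z => if c ≤ z then (1:ℝ) else 0) (Iic H) := by
  have hf : (fun z => if c ≤ z then (1:ℝ) else 0) = (Ici c).indicator (fun _ => (1:ℝ)) :=
    funext fun z => by simp [Set.indicator_apply, mem_Ici]
  rw [IntegrableOn, hf, integrable_indicator_iff measurableSet_Ici]
  rw [IntegrableOn, Measure.restrict_restrict measurableSet_Ici]
  refine (integrableOn_const_iff).2 (Or.inr ?_)
  rw [Ici_inter_Iic, Real.volume_Icc]
  exact ENNReal.ofReal_lt_top

lemma indicator_integral {c H : ℝ} (hc : c ≤ H) :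
    ∫ z in Iic H, (if c ≤ z then (1:ℝ) else 0) = H - c := by
  have hf : (fun z => if c ≤ z then (1:ℝ) else 0) = (Ici c).indicator (fun _ => (1:ℝ)) :=
    funext fun z => by simp [Set.indicator_apply, mem_Ici]
  rw [hf, setIntegral_indicator measurableSet_Ici, Iic_inter_Ici, setIntegral_const,
    Real.volume_real_Icc_of_le hc, smul_eq_mul, mul_one]

/-- Uniform SSD uniform criterion. -/
lemma ssd_FF {l1 h1 l2 h2 : ℝ} (h1lt : l1 < h1) (h2lt : l2 < h2) (hl : l2 ≤ l1)
    (hm : l2 + h2 ≤ l1 + h1) (P Q : Measure ℝ)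
    (hP : ∀ z, cdf P z = F l1 h1 z) (hQ : ∀ z, cdf Q z = F l2 h2 z) : SSD P Q := by
  intro u
  simp only [hP, hQ]
  refine key (F l1 h1) (F l2 h2) (max h1 h2)
    ((integrableOn_F l1 h1 _ h1lt).sub (integrableOn_F l2 h2 _ h2lt))
    (F_cross h1lt h2lt hl)
    (fun z hz => by
      rw [F_eq_one h1lt (le_trans (le_max_left _ _) hz),
        F_eq_one h2lt (le_trans (le_max_right _ _) hz)])
    ?_ u
  rw [integral_sub (integrableOn_F l1 h1 _ h1lt) (integrableOn_F l2 h2 _ h2lt),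
    integral_F h1lt (le_max_left _ _), integral_F h2lt (le_max_right _ _)]
  linarith

/-- Dirac SSD uniform criterion. -/
lemma ssd_DiracF {c l2 h2 : ℝ} (h2lt : l2 < h2) (hc : l2 + h2 ≤ 2 * c)
    (P Q : Measure ℝ)
    (hP : ∀ z, cdf P z = if c ≤ z then 1 else 0) (hQ : ∀ z, cdf Q z = F l2 h2 z) :
    SSD P Q := by
  intro u
  simp only [hP, hQ]
  refine key (fun z => if c ≤ z then (1:ℝ) else 0) (F l2 h2) (max c h2)
    ((indicator_integrableOn c _).sub (integrableOn_F l2 h2 _ h2lt))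
    (fun z z' hzz' hlt => ?_)
    (fun z hz => by
      rw [if_pos (le_trans (le_max_left _ _) hz),
        F_eq_one h2lt (le_trans (le_max_right _ _) hz)])
    ?_ u
  · by_cases hcz : c ≤ z
    · rw [if_pos (le_trans hcz hzz')]
      exact F_le_one h2lt z'
    · rw [if_neg hcz] at hlt
      exact absurd hlt (not_lt.2 (F_nonneg h2lt z))
  · rw [integral_sub (indicator_integrableOn c _) (integrableOn_F l2 h2 _ h2lt),
      indicator_integral (le_max_left _ _), integral_F h2lt (le_max_right _ _)]
    linarith

lemma F_affine {l h β c : ℝ} (hl : l < h) (hβ : 0 < β) (z : ℝ) :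
    F l h ((z - c) / β + (l + h) / 2)
      = F (c - β * (h - l) / 2) (c + β * (h - l) / 2) z := by
  set t := (z - c) / β + (l + h) / 2 with htdef
  have hd : c + β * (h - l) / 2 - (c - β * (h - l) / 2) = β * (h - l) := by ring
  rcases le_total z (c + β * (h - l) / 2) with hz | hz
  · have hdb : (z - c) / β ≤ (h - l) / 2 := by
      rw [div_le_iff₀ hβ]; nlinarith
    have ht : t ≤ h := by rw [htdef]; linarith
    have hnum : t - l = (z - (c - β * (h - l) / 2)) / β := by
      rw [htdef]; field_simp; ring
    rw [F, F, min_eq_left ht, min_eq_left hz, hnum, hd]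
    rcases le_total (z - (c - β * (h - l) / 2)) 0 with hx | hx
    · rw [max_eq_left (div_nonpos_iff.2 (Or.inr ⟨hx, hβ.le⟩)), max_eq_left hx,
        zero_div, zero_div]
    · rw [max_eq_right (div_nonneg hx hβ.le), max_eq_right hx, div_div]
  · have hdb : (h - l) / 2 ≤ (z - c) / β := by
      rw [le_div_iff₀ hβ]; nlinarith
    have ht : h ≤ t := by rw [htdef]; linarith
    rw [F, F, min_eq_right ht, min_eq_right hz, hd,
      max_eq_right (by linarith : (0:ℝ) ≤ h - l), div_self (by linarith),
      max_eq_right (mul_pos hβ (sub_pos.2 hl)).le, div_self (ne_of_gt (mul_pos hβ (sub_pos.2 hl)))]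

lemma cdf_map_affine {l h β c : ℝ} (hl : l < h) (hβ : 0 < β) (z : ℝ) :
    cdf ((unif l h).map (fun t => c + β * (t - (l + h) / 2))) z
      = F (c - β * (h - l) / 2) (c + β * (h - l) / 2) z := by
  have hprob := isProbabilityMeasure_unif hl
  have hmeas : Measurable (fun t : ℝ => c + β * (t - (l + h) / 2)) := by fun_prop
  have : IsProbabilityMeasure ((unif l h).map (fun t => c + β * (t - (l + h) / 2))) :=
    Measure.isProbabilityMeasure_map hmeas.aemeasurable
  rw [cdf_eq_real, measureReal_def, Measure.map_apply hmeas measurableSet_Iic]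
  have hpre : (fun t : ℝ => c + β * (t - (l + h) / 2)) ⁻¹' (Iic z)
      = Iic ((z - c) / β + (l + h) / 2) := by
    ext t
    simp only [mem_preimage, mem_Iic]
    rw [← sub_le_iff_le_add, le_div_iff₀ hβ]
    constructor <;> intro hh <;> nlinarith
  rw [hpre, ← measureReal_def, ← cdf_eq_real, cdf_unif hl, F_affine hl hβ]

lemma cdf_map_const {l h c : ℝ} (hl : l < h) (z : ℝ) :
    cdf ((unif l h).map (fun t => c + 0 * (t - (l + h) / 2))) z
      = if c ≤ z then 1 else 0 := by
  have hprob := isProbabilityMeasure_unif hl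
  have hfun : (fun t : ℝ => c + 0 * (t - (l + h) / 2)) = fun _ => c := by
    funext t; ring
  rw [hfun, Measure.map_const, measure_univ, one_smul]
  have : IsProbabilityMeasure (Measure.dirac c) := by infer_instance
  rw [cdf_eq_real, measureReal_def, Measure.dirac_apply' _ measurableSet_Iic]
  by_cases hcz : c ≤ z
  · rw [Set.indicator_of_mem (mem_Iic.2 hcz)]
    simp [hcz]
  · rw [Set.indicator_of_notMem (fun hh => hcz (mem_Iic.1 hh))]
    simp [hcz]

/-! ### Game-theoretic auxiliary results -/

variable {N : Type*} [Fintype N] [DecidableEq N]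

/-- Tight coalitions are closed under union for convex games. -/
lemma tight_union (v : Finset N → ℝ)
    (hconv : ∀ S T : Finset N, v S + v T ≤ v (S ∪ T) + v (S ∩ T))
    (y : N → ℝ) (hfeas : ∀ S, v S ≤ ∑ i ∈ S, y i) {S T : Finset N}
    (hS : ∑ i ∈ S, y i = v S) (hT : ∑ i ∈ T, y i = v T) :
    ∑ i ∈ S ∪ T, y i = v (S ∪ T) := by
  have h1 := hfeas (S ∪ T)
  have h2 := hfeas (S ∩ T)
  have h3 := hconv S T
  have h4 : (∑ i ∈ S ∪ T, y i) + ∑ i ∈ S ∩ T, y i = (∑ i ∈ S, y i) + ∑ i ∈ T, y i :=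
    Finset.sum_union_inter
  linarith

/-- One reduction step: lower coordinate `i` to create a tight coalition containing `i`. -/
lemma step (v : Finset N → ℝ) (x : N → ℝ) (hx : ∀ S, v S ≤ ∑ i ∈ S, x i) (i : N) :
    ∃ y : N → ℝ, (∀ j, y j ≤ x j) ∧ (∀ S, v S ≤ ∑ j ∈ S, y j) ∧
      ∃ S, i ∈ S ∧ ∑ j ∈ S, y j = v S := by
  classical
  set 𝒮 : Finset (Finset N) := Finset.univ.filter (fun S => i ∈ S) with h𝒮
  have h𝒮ne : 𝒮.Nonempty := ⟨{i}, by simp [h𝒮]⟩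
  set δ : ℝ := 𝒮.inf' h𝒮ne (fun S => (∑ j ∈ S, x j) - v S) with hδ
  have hδ_le : ∀ S ∈ 𝒮, δ ≤ (∑ j ∈ S, x j) - v S := fun S hS =>
    Finset.inf'_le _ hS
  have hδ_nonneg : 0 ≤ δ := by
    rw [hδ]
    apply Finset.le_inf'
    intro S hS
    linarith [hx S]
  obtain ⟨S₀, hS₀mem, hS₀⟩ := Finset.exists_mem_eq_inf' h𝒮ne (fun S => (∑ j ∈ S, x j) - v S)
  refine ⟨fun j => x j - (if j = i then δ else 0), ?_, ?_, S₀, ?_, ?_⟩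
  · intro j
    by_cases hj : j = i <;> simp [hj, hδ_nonneg]
  · intro S
    have hsum : ∑ j ∈ S, (x j - (if j = i then δ else 0))
        = (∑ j ∈ S, x j) - (if i ∈ S then δ else 0) := by
      rw [Finset.sum_sub_distrib, Finset.sum_ite_eq' S i (fun _ => δ)]
    rw [hsum]
    by_cases hi : i ∈ S
    · rw [if_pos hi]
      have := hδ_le S (by simp [h𝒮, hi])
      linarith
    · rw [if_neg hi]
      linarith [hx S]
  · exact (Finset.mem_filter.1 hS₀mem).2
  · have hsum : ∑ j ∈ S₀, (x j - (if j = i then δ else 0))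
        = (∑ j ∈ S₀, x j) - (if i ∈ S₀ then δ else 0) := by
      rw [Finset.sum_sub_distrib, Finset.sum_ite_eq' S₀ i (fun _ => δ)]
    rw [hsum, if_pos (Finset.mem_filter.1 hS₀mem).2, hδ, hS₀]
    ring

/-- Iterate over a list of players. -/
lemma list_step (v : Finset N → ℝ) :
    ∀ (l : List N) (x : N → ℝ), (∀ S, v S ≤ ∑ i ∈ S, x i) →
      ∃ y : N → ℝ, (∀ j, y j ≤ x j) ∧ (∀ S, v S ≤ ∑ j ∈ S, y j) ∧
        ∀ i ∈ l, ∃ S, i ∈ S ∧ ∑ j ∈ S, y j = v S := by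
  intro l
  induction l with
  | nil => exact fun x hx => ⟨x, fun j => le_refl _, hx, by simp⟩
  | cons i l ih =>
    intro x hx
    obtain ⟨x', hx'le, hx'feas, S₀, hiS₀, hS₀⟩ := step v x hx i
    obtain ⟨y, hyle, hyfeas, hytight⟩ := ih x' hx'feas
    refine ⟨y, fun j => le_trans (hyle j) (hx'le j), hyfeas, ?_⟩
    intro k hk
    rcases List.mem_cons.1 hk with hk | hk
    · subst hk
      refine ⟨S₀, hiS₀, le_antisymm ?_ (hyfeas S₀)⟩
      calc ∑ j ∈ S₀, y j ≤ ∑ j ∈ S₀, x' j := Finset.sum_le_sum (fun j _ => hyle j)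
        _ = v S₀ := hS₀
    · exact hytight k hk

/-- Below any feasible vector of a convex game there is a core element. -/
lemma exists_core_le (v : Finset N → ℝ)
    (hconv : ∀ S T : Finset N, v S + v T ≤ v (S ∪ T) + v (S ∩ T))
    (hv0 : v ∅ = 0)
    (x : N → ℝ) (hx : ∀ S, v S ≤ ∑ i ∈ S, x i) :
    ∃ y : N → ℝ, (∀ j, y j ≤ x j) ∧ (∀ S, v S ≤ ∑ i ∈ S, y i) ∧
      ∑ i : N, y i = v Finset.univ := by
  classical
  obtain ⟨y, hyle, hyfeas, hytight⟩ := list_step v Finset.univ.toList x hx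
  refine ⟨y, hyle, hyfeas, ?_⟩
  have hunion : ∀ T : Finset N, ∃ U : Finset N, T ⊆ U ∧ ∑ i ∈ U, y i = v U := by
    intro T
    induction T using Finset.induction with
    | empty => exact ⟨∅, Finset.Subset.refl _, by simp [hv0]⟩
    | @insert k T' hnotmem ih =>
      obtain ⟨U, hTU, hU⟩ := ih
      obtain ⟨S, hkS, hS⟩ := hytight k (by simp)
      refine ⟨S ∪ U, ?_, tight_union v hconv y hyfeas hS hU⟩
      intro j hj
      rcases Finset.mem_insert.1 hj with hj | hj
      · exact Finset.mem_union_left _ (hj ▸ hkS)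
      · exact Finset.mem_union_right _ (hTU hj)
  obtain ⟨U, hTU, hU⟩ := hunion Finset.univ
  have : U = Finset.univ := Finset.univ_subset_iff.1 hTU
  rw [← this, ← hU, this]

end SSDAux

/-- Under uniformly distributed coalitional values, if the lower bound game is convex and
the core of the mean game is nonempty, then the SSD-core with transfer payments is
nonempty. -/
theorem ssd_core_uniform_sufficient {N : Type*} [Fintype N] [DecidableEq N] [Nonempty N]
    (a b : Finset N → ℝ)
    (hab : ∀ S : Finset N, S.Nonempty → a S < b S)
    (hconv : IsConvexGame (fun S => if S = ∅ then 0 else a S))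
    (hcore : (core (fun S => if S = ∅ then 0 else (a S + b S) / 2)).Nonempty) :
    ∃ d r : N → ℝ, (∀ i, 0 ≤ r i) ∧
      (∑ i : N, d i = (a Finset.univ + b Finset.univ) / 2) ∧
      (∑ i : N, r i = 1) ∧
      ∀ S : Finset N, S.Nonempty →
        SSD ((unif (a Finset.univ) (b Finset.univ)).map
            (fun z =>
              (∑ i ∈ S, d i) +
                (∑ i ∈ S, r i) * (z - (a Finset.univ + b Finset.univ) / 2)))
          (unif (a S) (b S)) := by
  classical
  obtain ⟨x, hx1, hx2⟩ := hcore
  have huniv : (Finset.univ : Finset N).Nonempty := Finset.univ_nonempty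
  have hune : (Finset.univ : Finset N) ≠ ∅ := huniv.ne_empty
  have habN : a Finset.univ < b Finset.univ := hab _ huniv
  dsimp only at hx1 hx2
  rw [if_neg hune] at hx2
  have hxfeas : ∀ S : Finset N, (if S = ∅ then 0 else a S) ≤ ∑ i ∈ S, x i := by
    intro S
    by_cases hS : S = ∅
    · simp [hS]
    · have hSne : S.Nonempty := Finset.nonempty_iff_ne_empty.2 hS
      have h1 := hx1 S
      rw [if_neg hS] at h1 ⊢
      linarith [hab S hSne]
  obtain ⟨y, hyle, hyfeas, hyuniv⟩ :=
    SSDAux.exists_core_le _ hconv (by simp) x hxfeas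
  rw [if_neg hune] at hyuniv
  set w : ℝ := b Finset.univ - a Finset.univ with hw
  have hwpos : 0 < w := by rw [hw]; linarith
  refine ⟨x, fun i => (x i - y i) * (2 / w), ?_, hx2, ?_, ?_⟩
  · intro i
    exact mul_nonneg (sub_nonneg.2 (hyle i)) (by positivity)
  · rw [← Finset.sum_mul, Finset.sum_sub_distrib, hx2, hyuniv]
    field_simp
    ring
  · intro S hSne
    have hSnee : S ≠ ∅ := hSne.ne_empty
    have habS : a S < b S := hab S hSne
    have hyS : a S ≤ ∑ i ∈ S, y i := by
      have h1 := hyfeas S; rwa [if_neg hSnee] at h1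
    have hxS : (a S + b S) / 2 ≤ ∑ i ∈ S, x i := by
      have h1 := hx1 S; rwa [if_neg hSnee] at h1
    have hyxS : ∑ i ∈ S, y i ≤ ∑ i ∈ S, x i :=
      Finset.sum_le_sum (fun i _ => hyle i)
    have hβsum : ∑ i ∈ S, (x i - y i) * (2 / w)
        = ((∑ i ∈ S, x i) - ∑ i ∈ S, y i) * (2 / w) := by
      rw [← Finset.sum_mul, Finset.sum_sub_distrib]
    have hβnonneg : 0 ≤ ∑ i ∈ S, (x i - y i) * (2 / w) := by
      rw [hβsum]
      exact mul_nonneg (by linarith) (by positivity)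
    rcases eq_or_lt_of_le hβnonneg with hβ0 | hβpos
    · -- Dirac case
      have hcy : ∑ i ∈ S, y i = ∑ i ∈ S, x i := by
        have h2 : ((∑ i ∈ S, x i) - ∑ i ∈ S, y i) * (2 / w) = 0 := by
          rw [← hβsum, ← hβ0]
        rcases mul_eq_zero.1 h2 with h3 | h3
        · linarith
        · exfalso
          have : (0:ℝ) < 2 / w := by positivity
          linarith
      refine SSDAux.ssd_DiracF (c := ∑ i ∈ S, x i) habS (by linarith) _ _ ?_
        (fun z => SSDAux.cdf_unif habS z)
      intro z
      rw [← hβ0]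
      exact SSDAux.cdf_map_const habN z
    · -- uniform case
      set β : ℝ := ∑ i ∈ S, (x i - y i) * (2 / w) with hβdef
      have hl1 : (∑ i ∈ S, x i) - β * (b Finset.univ - a Finset.univ) / 2
          = ∑ i ∈ S, y i := by
        rw [hβsum, ← hw]
        field_simp
        ring
      refine SSDAux.ssd_FF
        (l1 := (∑ i ∈ S, x i) - β * (b Finset.univ - a Finset.univ) / 2)
        (h1 := (∑ i ∈ S, x i) + β * (b Finset.univ - a Finset.univ) / 2)
        ?_ habS ?_ ?_ _ _ ?_ (fun z => SSDAux.cdf_unif habS z)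
      · have : 0 < β * (b Finset.univ - a Finset.univ) / 2 := by
          rw [← hw] at *
          positivity
        linarith
      · rw [hl1]; exact hyS
      · have h0 : 0 ≤ β * (b Finset.univ - a Finset.univ) / 2 := by
          rw [← hw]; positivity
        linarith
      · intro z
        exact SSDAux.cdf_map_affine habN hβpos z
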